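/- arXiv:1703.09421 — 3 statements merged into one kernel-verified Lean document; each statement's English description precedes it below -/
import Mathlib

section
/- Consider a single-row puzzle with swaps and rotations using exactly two colors. Call a piece a constant if every rotation gives equal left and right colors (i.e., both pairs of opposite edges are monochromatic pairs), and a switch otherwise. If the puzzle contains only constants, it is solvable if and only if it does not contain both a piece all of whose edges are black and a piece all of whose edges are white. -/
/-- A two-color piece: a 4-tuple (right, top, left, bottom) of Booleans,
where `true` is black and `false` is white. -/
abbrev BPiece := Bool × Bool × Bool × Bool

/-- A 90° rotation cyclically shifts the 4-tuple of edge colors. -/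
def rotp (p : BPiece) : BPiece := (p.2.1, p.2.2.1, p.2.2.2, p.1)

/-- A piece together with a chosen rotation, as actually placed. -/
def place (x : BPiece × Fin 4) : BPiece := rotp^[(x.2 : ℕ)] x.1

/-- Solvability of the single-row puzzle with swaps and rotations, free borders:
some ordering of all the pieces together with chosen rotations such that every
pair of adjacent vertical edges matches. -/
def Solvable (P : Multiset BPiece) : Prop :=
  ∃ l : List (BPiece × Fin 4),
    (↑(l.map Prod.fst) : Multiset BPiece) = P ∧
    l.Chain' fun x y => (place x).1 = (place y).2.2.1

/-- A constant piece: every rotation gives equal left and right colors. -/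
def IsConstant (p : BPiece) : Prop :=
  ∀ k : Fin 4, (rotp^[(k : ℕ)] p).1 = (rotp^[(k : ℕ)] p).2.2.1

/-- A switch: some rotation gives different left and right colors. -/
def IsSwitch (p : BPiece) : Prop :=
  ∃ k : Fin 4, (rotp^[(k : ℕ)] p).1 ≠ (rotp^[(k : ℕ)] p).2.2.1

/-- The all-black piece. -/
def allBlack : BPiece := (true, true, true, true)

/-- The all-white piece. -/
def allWhite : BPiece := (false, false, false, false)

lemma chain'_all {l : List (BPiece × Fin 4)} {c : Bool}
    (h : ∀ x ∈ l, (place x).1 = c ∧ (place x).2.2.1 = c) :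
    l.Chain' (fun x y => (place x).1 = (place y).2.2.1) := by
  induction l with
  | nil => exact List.isChain_nil
  | cons a t ih =>
    cases t with
    | nil => exact List.isChain_singleton _
    | cons b t' =>
      refine List.isChain_cons_cons.mpr ⟨?_, ih ?_⟩
      · rw [(h a (by simp)).1, (h b (by simp)).2]
      · intro x hx; exact h x (List.mem_cons_of_mem _ hx)

lemma chain_eq (l : List (BPiece × Fin 4))
    (hlr : ∀ x ∈ l, (place x).2.2.1 = (place x).1)
    (hc : l.Chain' fun x y => (place x).1 = (place y).2.2.1) :
    ∀ x ∈ l, ∀ y ∈ l, (place x).1 = (place y).1 := by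
  induction l with
  | nil => simp
  | cons a t ih =>
    have ht := ih (fun x hx => hlr x (List.mem_cons_of_mem _ hx)) hc.tail
    have ha : ∀ y ∈ t, (place y).1 = (place a).1 := by
      cases t with
      | nil => simp
      | cons b t' =>
        intro y hy
        have hab : (place a).1 = (place b).2.2.1 := (List.isChain_cons_cons.mp hc).1
        have : (place y).1 = (place b).1 := ht y hy b (by simp)
        rw [this, ← hlr b (by simp), ← hab]
    intro x hx y hy
    rcases List.mem_cons.mp hx with hxa | hx <;> rcases List.mem_cons.mp hy with hya | hy
    · rw [hxa, hya]
    · rw [hxa]; exact (ha y hy).symm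
    · rw [hya]; exact ha x hx
    · exact ht x hx y hy


/-- A two-color single-row puzzle (swaps and rotations) consisting only of
constant pieces is solvable iff it does not contain both an all-black and an
all-white piece. -/
theorem constants_solvable_iff (P : Multiset BPiece)
    (hconst : ∀ p ∈ P, IsConstant p) :
    Solvable P ↔ ¬(allBlack ∈ P ∧ allWhite ∈ P) := by
  constructor
  · rintro ⟨l, hl, hc⟩ ⟨hB, hW⟩
    have hmem : ∀ x ∈ l, x.1 ∈ P := by
      intro x hx
      rw [← hl]
      exact Multiset.mem_coe.mpr (List.mem_map_of_mem hx)
    have hlr : ∀ x ∈ l, (place x).2.2.1 = (place x).1 := by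
      intro x hx
      exact (hconst x.1 (hmem x hx) x.2).symm
    rw [← hl] at hB hW
    obtain ⟨xB, hxB, hxB1⟩ := List.mem_map.mp (Multiset.mem_coe.mp hB)
    obtain ⟨xW, hxW, hxW1⟩ := List.mem_map.mp (Multiset.mem_coe.mp hW)
    have hvB : (place xB).1 = true := by
      have : place xB = allBlack := by
        show rotp^[(xB.2 : ℕ)] xB.1 = allBlack
        rw [hxB1]; exact Function.iterate_fixed rfl _
      rw [this]; rfl
    have hvW : (place xW).1 = false := by
      have : place xW = allWhite := by
        show rotp^[(xW.2 : ℕ)] xW.1 = allWhite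
        rw [hxW1]; exact Function.iterate_fixed rfl _
      rw [this]; rfl
    have := chain_eq l hlr hc xB hxB xW hxW
    rw [hvB, hvW] at this
    exact Bool.noConfusion this
  · intro h
    have : ∃ c : Bool, (if c then allWhite else allBlack) ∉ P := by
      by_cases hB : allBlack ∈ P
      · exact ⟨true, fun hW => h ⟨hB, by simpa using hW⟩⟩
      · exact ⟨false, by simpa using hB⟩
    obtain ⟨c, hcP⟩ := this
    refine ⟨P.toList.map (fun p => (p, if p.1 = c then (0 : Fin 4) else 1)), ?_, ?_⟩
    · rw [List.map_map]
      have hid : (Prod.fst ∘ fun p : BPiece => (p, if p.1 = c then (0 : Fin 4) else 1)) = id := rfl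
      rw [hid, List.map_id, Multiset.coe_toList]
    · refine chain'_all (c := c) ?_
      intro x hx
      obtain ⟨p, hp', heq⟩ := List.mem_map.mp hx
      subst heq
      have hpP : p ∈ P := Multiset.mem_toList.mp hp'
      have hC := hconst p hpP
      have h0 := hC 0
      have h1 := hC 1
      simp only [Fin.val_zero, Fin.val_one, Function.iterate_one, Function.iterate_zero,
        id] at h0 h1
      obtain ⟨a, b, cc, d⟩ := p
      simp only [rotp] at h0 h1
      by_cases hac : a = c
      · subst hac
        constructor <;> simp [place, rotp, ← h0]
      · have hbc : b = c := by
          by_contra hbc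
          apply hcP
          have ha : a = !c := by cases a <;> cases c <;> simp_all
          have hb : b = !c := by cases b <;> cases c <;> simp_all
          have : (if c = true then allWhite else allBlack) = ((a, b, cc, d) : BPiece) := by
            rw [← h0, ← h1, ha, hb]; cases c <;> rfl
          rw [this]; exact hpP
        subst hbc
        constructor <;> simp [place, rotp, if_neg hac, ← h1]
end

section
/- Consider a single-row puzzle with swaps and rotations over two colors that contains at least one all-black piece, at least one all-white piece, and at least one switch (a piece admitting a rotation with different left and right colors). Then the puzzle is solvable. -/
instance : DecidablePred IsSwitch := fun p => by
  unfold IsSwitch; infer_instance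

/-- Any switch admits, for each color `a`, a rotation with left color `a`
and right color `!a`. -/
lemma switch_flip : ∀ p : BPiece, ∀ a : Bool, IsSwitch p →
    ∃ k : Fin 4, (rotp^[(k : ℕ)] p).2.2.1 = a ∧ (rotp^[(k : ℕ)] p).1 = !a := by
  decide

/-- A rotation turning a switch into a transition with left color `a`. -/
noncomputable def trot (p : BPiece) (a : Bool) : Fin 4 :=
  if h : ∃ k : Fin 4, (rotp^[(k : ℕ)] p).2.2.1 = a ∧ (rotp^[(k : ℕ)] p).1 = !a
  then h.choose else 0

lemma trot_spec {p : BPiece} (hs : IsSwitch p) (a : Bool) :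
    (place (p, trot p a)).2.2.1 = a ∧ (place (p, trot p a)).1 = !a := by
  have h := switch_flip p a hs
  simp only [place, trot, dif_pos h]
  exact h.choose_spec

/-- Place a list of switches alternately, starting with left color `a`. -/
noncomputable def altPlace : Bool → List BPiece → List (BPiece × Fin 4)
  | _, [] => []
  | a, p :: ps => (p, trot p a) :: altPlace (!a) ps

lemma altPlace_map (a : Bool) (l : List BPiece) :
    (altPlace a l).map Prod.fst = l := by
  induction l generalizing a with
  | nil => rfl
  | cons p ps ih => simp [altPlace, ih]

/-- A placed row which chains correctly and whose head has left color `c`. -/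
def Ok (c : Bool) (l : List (BPiece × Fin 4)) : Prop :=
  (l.Chain' fun x y => (place x).1 = (place y).2.2.1) ∧
    ∀ x ∈ l.head?, (place x).2.2.1 = c

lemma ok_nil (c : Bool) : Ok c ([] : List (BPiece × Fin 4)) := by
  constructor
  · exact List.isChain_nil
  · intro x hx; simp at hx

lemma ok_cons {c : Bool} {l : List (BPiece × Fin 4)} (h : Ok c l)
    (x : BPiece × Fin 4) (hr : (place x).1 = c) :
    Ok ((place x).2.2.1) (x :: l) := by
  constructor
  · refine List.isChain_cons.mpr ?_
    exact ⟨fun y hy => hr.trans (h.2 y hy).symm, h.1⟩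
  · intro y hy; simp at hy; subst hy; rfl

lemma altPlace_ok (a : Bool) (l : List BPiece) (h : ∀ p ∈ l, IsSwitch p) :
    Ok a (altPlace a l) := by
  induction l generalizing a with
  | nil => exact ok_nil a
  | cons p ps ih =>
    have hp := h p (List.mem_cons_self)
    have ihp := ih (!a) (fun q hq => h q (List.mem_cons_of_mem _ hq))
    have := ok_cons ihp (p, trot p a) (trot_spec hp a).2
    rwa [(trot_spec hp a).1] at this

lemma ok_const_prepend {c : Bool} {l : List (BPiece × Fin 4)} (h : Ok c l)
    (B : List BPiece) (hB : ∀ p ∈ B, p.1 = c ∧ p.2.2.1 = c) :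
    Ok c ((B.map (fun p => (p, (0 : Fin 4)))) ++ l) := by
  induction B with
  | nil => simpa using h
  | cons p ps ih =>
    have hps := ih (fun q hq => hB q (List.mem_cons_of_mem _ hq))
    have hp := hB p (List.mem_cons_self)
    have hplace : place (p, (0 : Fin 4)) = p := by simp [place]
    have := ok_cons hps (p, (0 : Fin 4)) (by rw [hplace]; exact hp.1)
    rw [hplace, hp.2] at this
    simpa using this

/-- A two-color single-row puzzle (swaps and rotations) containing an all-black
piece, an all-white piece, and at least one switch is solvable. -/
theorem switch_makes_solvable (P : Multiset BPiece)
    (hb : allBlack ∈ P) (hw : allWhite ∈ P)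
    (hs : ∃ p ∈ P, IsSwitch p) :
    Solvable P := by
  classical
  obtain ⟨s, hsP, hss⟩ := hs
  set L : List BPiece := (P.erase s).toList with hLdef
  have hL : (↑L : Multiset BPiece) = P.erase s := Multiset.coe_toList _
  set f : BPiece → Bool := fun p => decide (IsSwitch p) with hf
  set S : List BPiece := L.filter f with hS
  set N : List BPiece := L.filter (fun p => !f p) with hN
  set Nb : List BPiece := N.filter (fun p => p.1) with hNb
  set Nw : List BPiece := N.filter (fun p => !p.1) with hNw
  have hSsw : ∀ p ∈ S, IsSwitch p := by
    intro p hp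
    have := (List.mem_filter.1 hp).2
    exact of_decide_eq_true this
  have hNconst : ∀ p ∈ N, p.1 = p.2.2.1 := by
    intro p hp
    have hnd := (List.mem_filter.1 hp).2
    have : ¬ IsSwitch p := by
      intro hsw
      rw [hf] at hnd
      simp [hsw] at hnd
    rw [IsSwitch] at this
    push_neg at this
    have h0 := this 0
    simpa using h0
  have hNbc : ∀ p ∈ Nb, p.1 = true ∧ p.2.2.1 = true := by
    intro p hp
    have h1 := (List.mem_filter.1 hp).2
    have h2 := hNconst p (List.mem_filter.1 hp).1
    exact ⟨h1, h2 ▸ h1⟩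
  have hNwc : ∀ p ∈ Nw, p.1 = false ∧ p.2.2.1 = false := by
    intro p hp
    have h1 := (List.mem_filter.1 hp).2
    have h1' : p.1 = false := by simpa using h1
    have h2 := hNconst p (List.mem_filter.1 hp).1
    exact ⟨h1', h2 ▸ h1'⟩
  -- build the row
  refine ⟨(Nw.map (fun p => (p, (0 : Fin 4)))) ++
    ((s, trot s false) :: ((Nb.map (fun p => (p, (0 : Fin 4)))) ++ altPlace true S)), ?_, ?_⟩
  · -- multiset equality
    have hmap : ((Nw.map (fun p => (p, (0 : Fin 4)))) ++
        ((s, trot s false) :: ((Nb.map (fun p => (p, (0 : Fin 4)))) ++ altPlace true S))).map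
        Prod.fst = Nw ++ s :: (Nb ++ S) := by
      have hid : (Prod.fst ∘ fun p : BPiece => (p, (0 : Fin 4))) = id := rfl
      simp [altPlace_map, List.map_map, hid]
    rw [hmap]
    have hperm1 : List.Perm (Nb ++ Nw) N := List.filter_append_perm _ N
    have hperm2 : List.Perm (S ++ N) L := by
      have := List.filter_append_perm f L
      simpa [hS, hN] using this
    have hperm : List.Perm (Nw ++ s :: (Nb ++ S)) (s :: L) := by
      refine List.Perm.trans List.perm_middle (List.Perm.cons s ?_)
      refine List.Perm.trans ?_ hperm2
      refine List.Perm.trans ?_ (List.perm_append_comm (l₁ := N) (l₂ := S))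
      refine List.Perm.trans ?_ (hperm1.append_right S)
      rw [← List.append_assoc]
      exact (List.perm_append_comm).append_right S
    calc (↑(Nw ++ s :: (Nb ++ S)) : Multiset BPiece) = ↑(s :: L) := Quot.sound hperm
      _ = s ::ₘ (↑L : Multiset BPiece) := rfl
      _ = s ::ₘ P.erase s := by rw [hL]
      _ = P := Multiset.cons_erase hsP
  · -- chaining
    have okS : Ok true (altPlace true S) := altPlace_ok true S hSsw
    have okB : Ok true ((Nb.map (fun p => (p, (0 : Fin 4)))) ++ altPlace true S) :=
      ok_const_prepend okS Nb hNbc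
    have oks : Ok false ((s, trot s false) ::
        ((Nb.map (fun p => (p, (0 : Fin 4)))) ++ altPlace true S)) := by
      have hr : (place (s, trot s false)).1 = true := by
        simpa using (trot_spec hss false).2
      have := ok_cons okB (s, trot s false) hr
      rwa [(trot_spec hss false).1] at this
    have okW := ok_const_prepend oks Nw hNwc
    exact okW.1
end

section
/- Let a two-color single-row puzzle (swaps and rotations allowed, free borders) contain both an all-black and an all-white piece. Then the puzzle is solvable if and only if it contains at least one switch piece (a piece with some rotation giving different left and right colors). -/
def CanC (c : Bool) (q : BPiece) : Prop :=
  ∃ k : Fin 4, (rotp^[(k : ℕ)] q).2.2.1 = c ∧ (rotp^[(k : ℕ)] q).1 = c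

instance inst_s11 : DecidablePred IsSwitch := fun q => by unfold IsSwitch; infer_instance
instance (c : Bool) : DecidablePred (CanC c) := fun q => by unfold CanC; infer_instance

theorem fact1 : ∀ q : BPiece, ¬ CanC false q → IsSwitch q ∨ CanC true q := by decide
theorem fact2 : ∀ q : BPiece, IsSwitch q → ∀ c : Bool,
    ∃ k : Fin 4, (rotp^[(k : ℕ)] q).2.2.1 = c ∧ (rotp^[(k : ℕ)] q).1 = !c := by decide

abbrev PRel (x y : BPiece × Fin 4) : Prop := (place x).1 = (place y).2.2.1

/-- Chain of constant-color pieces. -/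
theorem lemA (c : Bool) : ∀ Q : Multiset BPiece, (∀ q ∈ Q, CanC c q) →
    ∃ l : List (BPiece × Fin 4), (↑(l.map Prod.fst) : Multiset BPiece) = Q ∧
      l.Chain' PRel ∧ ∀ x ∈ l, (place x).1 = c ∧ (place x).2.2.1 = c := by
  intro Q
  refine Multiset.induction_on Q ?_ ?_
  · intro _; exact ⟨[], rfl, List.isChain_nil, by simp⟩
  · intro q Q ih h
    obtain ⟨k, hl, hr⟩ := h q (Multiset.mem_cons_self q Q)
    obtain ⟨l, hmap, hch, hall⟩ := ih fun a ha => h a (Multiset.mem_cons_of_mem ha)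
    refine ⟨(q, k) :: l, by rw [List.map_cons, ← Multiset.cons_coe, hmap], ?_, ?_⟩
    · rw [List.Chain', List.isChain_cons]
      refine ⟨fun y hy => ?_, hch⟩
      have := (hall y (List.mem_of_mem_head? hy)).2
      simpa [PRel, place, hr] using this.symm
    · intro x hx
      rcases List.mem_cons.mp hx with rfl | hx
      · exact ⟨hr, hl⟩
      · exact hall x hx

/-- Chain of switch pieces starting with prescribed left color. -/
theorem lemC : ∀ Q : Multiset BPiece, (∀ q ∈ Q, IsSwitch q) → ∀ c : Bool,
    ∃ l : List (BPiece × Fin 4), (↑(l.map Prod.fst) : Multiset BPiece) = Q ∧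
      l.Chain' PRel ∧ ∀ hd ∈ l.head?, (place hd).2.2.1 = c := by
  intro Q
  refine Multiset.induction_on Q ?_ ?_
  · intro _ c; exact ⟨[], rfl, List.isChain_nil, by simp⟩
  · intro q Q ih h c
    obtain ⟨k, hl, hr⟩ := fact2 q (h q (Multiset.mem_cons_self q Q)) c
    obtain ⟨l, hmap, hch, hhd⟩ := ih (fun a ha => h a (Multiset.mem_cons_of_mem ha)) (!c)
    refine ⟨(q, k) :: l, by rw [List.map_cons, ← Multiset.cons_coe, hmap], ?_, ?_⟩
    · rw [List.Chain', List.isChain_cons]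
      refine ⟨fun y hy => ?_, hch⟩
      have := hhd y hy
      simpa [PRel, place, hr] using this.symm
    · intro hd hhd2
      simp only [List.head?_cons, Option.mem_def, Option.some.injEq] at hhd2
      subst hhd2
      simpa [place] using hl

theorem stepEq : ∀ (t : List (BPiece × Fin 4)) (a), (a :: t).Chain' PRel →
    (∀ x ∈ t, IsConstant x.1) → ∀ y ∈ t, (place y).1 = (place a).1 := by
  intro t
  induction t with
  | nil => intro a _ _ y hy; simp at hy
  | cons b t ih =>
    intro a hch hc y hy
    have hab : PRel a b := (List.isChain_cons_cons.mp hch).1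
    have hb : (place b).1 = (place a).1 := by
      have h2 : (place b).1 = (place b).2.2.1 := hc b List.mem_cons_self b.2
      rw [h2]; exact hab.symm
    rcases List.mem_cons.mp hy with rfl | hy'
    · exact hb
    · rw [ih b (List.isChain_cons_cons.mp hch).2
        (fun x hx => hc x (List.mem_cons_of_mem _ hx)) y hy', hb]

/-- A two-color single-row puzzle (swaps and rotations) containing both an
all-black and an all-white piece is solvable iff it contains a switch. -/
theorem solvable_iff_switch (P : Multiset BPiece)
    (hb : allBlack ∈ P) (hw : allWhite ∈ P) :
    Solvable P ↔ ∃ p ∈ P, IsSwitch p := by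
  constructor
  · rintro ⟨l, hmap, hch⟩
    by_contra hno
    push_neg at hno
    have hconst : ∀ x ∈ l, IsConstant x.1 := by
      intro x hx
      have hxP : x.1 ∈ P := by
        rw [← hmap, Multiset.mem_coe]
        exact List.mem_map_of_mem (f := Prod.fst) hx
      intro k
      by_contra hk
      exact hno x.1 hxP ⟨k, hk⟩
    obtain ⟨xb, hxbl, hxb⟩ : ∃ x ∈ l, x.1 = allBlack := by
      rw [← hmap, Multiset.mem_coe, List.mem_map] at hb; exact hb
    obtain ⟨xw, hxwl, hxw⟩ : ∃ x ∈ l, x.1 = allWhite := by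
      rw [← hmap, Multiset.mem_coe, List.mem_map] at hw; exact hw
    have hpb : (place xb).1 = true := by
      have : place xb = allBlack := by
        unfold place; rw [hxb]; exact Function.iterate_fixed rfl _
      rw [this]; rfl
    have hpw : (place xw).1 = false := by
      have : place xw = allWhite := by
        unfold place; rw [hxw]; exact Function.iterate_fixed rfl _
      rw [this]; rfl
    rcases l with _ | ⟨a, t⟩
    · simp at hxbl
    · have hb' : (place xb).1 = (place a).1 := by
        rcases List.mem_cons.mp hxbl with rfl | h
        · rfl
        · exact stepEq t a hch (fun x hx => hconst x (List.mem_cons_of_mem _ hx)) xb h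
      have hw' : (place xw).1 = (place a).1 := by
        rcases List.mem_cons.mp hxwl with rfl | h
        · rfl
        · exact stepEq t a hch (fun x hx => hconst x (List.mem_cons_of_mem _ hx)) xw h
      rw [hpb] at hb'; rw [hpw] at hw'
      exact absurd (hb'.trans hw'.symm) (by decide)
  · rintro ⟨p, hp, hsw⟩
    obtain ⟨Q, rfl⟩ := Multiset.exists_cons_of_mem hp
    set W := Q.filter (CanC false) with hW
    set R := Q.filter (fun q => ¬ CanC false q) with hR
    set Sm := R.filter IsSwitch with hSm
    set Bm := R.filter (fun q => ¬ IsSwitch q) with hBm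
    obtain ⟨lW, hWmap, hWch, hWall⟩ := lemA false W (fun q hq => (Multiset.mem_filter.mp hq).2)
    obtain ⟨lB, hBmap, hBch, hBall⟩ := lemA true Bm (by
      intro q hq
      obtain ⟨hqR, hqs⟩ := Multiset.mem_filter.mp hq
      obtain ⟨_, hqc⟩ := Multiset.mem_filter.mp hqR
      rcases fact1 q hqc with h | h
      · exact absurd h hqs
      · exact h)
    obtain ⟨lS, hSmap, hSch, hShd⟩ := lemC Sm (fun q hq => (Multiset.mem_filter.mp hq).2) true
    obtain ⟨kp, hpl, hpr⟩ := fact2 p hsw false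
    refine ⟨lW ++ (p, kp) :: (lB ++ lS), ?_, ?_⟩
    · have h1 : W + R = Q := Multiset.filter_add_not _ Q
      have h2 : Sm + Bm = R := Multiset.filter_add_not _ R
      simp only [List.map_append, List.map_cons]
      rw [← Multiset.coe_add, ← Multiset.cons_coe, ← Multiset.coe_add, hWmap, hBmap, hSmap, ← h1, ← h2]
      simp only [← Multiset.singleton_add]
      abel
    · rw [List.Chain', List.isChain_append]
      refine ⟨hWch, ?_, ?_⟩
      · rw [List.isChain_cons]
        constructor
        · intro y hy
          show (place (p, kp)).1 = (place y).2.2.1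
          have hpr' : (place (p, kp)).1 = true := by simpa [place] using hpr
          rw [hpr']
          rcases lB with _ | ⟨b0, lB'⟩
          · exact (hShd y (by simpa using hy)).symm
          · obtain rfl : b0 = y := by simpa using hy
            exact ((hBall _ List.mem_cons_self).2).symm
        · rw [List.isChain_append]
          refine ⟨hBch, hSch, ?_⟩
          intro x hx y hy
          show (place x).1 = (place y).2.2.1
          rw [(hBall x (List.mem_of_mem_getLast? hx)).1, hShd y hy]
      · intro x hx y hy
        obtain rfl : (p, kp) = y := by simpa using hy
        show (place x).1 = (place (p, kp)).2.2.1
        rw [(hWall x (List.mem_of_mem_getLast? hx)).1]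
        simpa [place] using hpl.symm
end
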